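/- If (A,∂) is a differential graded algebra over a commutative ring and S(A) is its stabilization, obtained by adjoining two new free generators e_1, e_2 with |e_1| = |e_2| + 1, ∂(e_1) = e_2, ∂(e_2) = 0, then the homology of (S(A),∂) is isomorphic to the homology of (A,∂). -/

import Mathlib

/-- The sign (anti)automorphism of a `ℤ`-graded algebra: `x ↦ (-1)^i x` on `𝒮 i`. -/
lemma exists_signAlgHom (R S : Type) [CommRing R] [Ring S] [Algebra R S]
    (𝒮 : ℤ → Submodule R S) [GradedAlgebra 𝒮] :
    ∃ α : S →ₐ[R] S, ∀ (i : ℤ) (x : S), x ∈ 𝒮 i →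
      α x = ((Int.negOnePow i : ℤˣ) : ℤ) • x := by
  classical
  let t : (DirectSum ℤ fun i => 𝒮 i) →ₗ[R] S :=
    DirectSum.toModule R ℤ S (fun i => ((Int.negOnePow i : ℤˣ) : ℤ) • ((𝒮 i).subtype))
  let l : S →ₗ[R] S := t ∘ₗ (DirectSum.decomposeLinearEquiv 𝒮).toLinearMap
  have hl : ∀ (i : ℤ) (x : S), x ∈ 𝒮 i → l x = ((Int.negOnePow i : ℤˣ) : ℤ) • x := by
    intro i x hx
    have h1 : (DirectSum.decomposeLinearEquiv 𝒮).toLinearMap x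
        = DirectSum.lof R ℤ (fun i => 𝒮 i) i ⟨x, hx⟩ := by
      rw [DirectSum.lof_eq_of]
      exact DirectSum.decompose_of_mem 𝒮 hx
    show t _ = _
    rw [h1, DirectSum.toModule_lof]
    rfl
  have hone : l 1 = 1 := by
    rw [hl 0 1 (SetLike.one_mem_graded 𝒮)]
    simp
  have hmul : ∀ x y : S, l (x * y) = l x * l y := by
    intro x y
    induction x using DirectSum.Decomposition.inductionOn 𝒮 with
    | zero => simp
    | add a b ha hb => rw [add_mul, map_add, ha, hb, map_add, add_mul]
    | homogeneous m =>
      rename_i i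
      obtain ⟨m, hm⟩ := m
      induction y using DirectSum.Decomposition.inductionOn 𝒮 with
      | zero => simp
      | add a b ha hb => rw [mul_add, map_add, ha, hb, map_add, mul_add]
      | homogeneous m' =>
        rename_i j
        obtain ⟨n, hn⟩ := m'
        rw [hl i m hm, hl j n hn, hl (i + j) (m * n) (SetLike.mul_mem_graded hm hn)]
        rw [smul_mul_assoc, mul_smul_comm, smul_smul, Int.negOnePow_add]
        push_cast
        ring_nf
  exact ⟨AlgHom.ofLinearMap l hone hmul, hl⟩

section Derivation

variable (R : Type) [CommRing R] (S : Type) [Ring S] [Algebra R S]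

/-- The subalgebra of upper triangular 2×2 matrices. -/
def upperTri : Subalgebra R (Matrix (Fin 2) (Fin 2) S) where
  carrier := {M | M 1 0 = 0}
  mul_mem' := by
    intro a b ha hb
    show (a * b) 1 0 = 0
    rw [Matrix.mul_apply, Fin.sum_univ_two]
    simp only [Set.mem_setOf_eq] at ha hb
    rw [ha, hb, zero_mul, mul_zero, add_zero]
  add_mem' := by
    intro a b ha hb
    show (a + b) 1 0 = 0
    simp only [Set.mem_setOf_eq] at ha hb
    rw [Matrix.add_apply, ha, hb, add_zero]
  algebraMap_mem' := by
    intro r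
    show (algebraMap R (Matrix (Fin 2) (Fin 2) S)) r 1 0 = 0
    rw [Matrix.algebraMap_eq_diagonal]
    exact Matrix.diagonal_apply_ne _ (by decide)

/-- Projection onto the (0,0) entry, as an algebra hom on upper triangular matrices. -/
def utProj₀ : upperTri R S →ₐ[R] S where
  toFun M := M.val 0 0
  map_one' := rfl
  map_mul' := by
    rintro ⟨a, ha⟩ ⟨b, hb⟩
    show (a * b) 0 0 = a 0 0 * b 0 0
    rw [Matrix.mul_apply, Fin.sum_univ_two]
    have hb' : b 1 0 = 0 := hb
    change a 0 0 * b 0 0 + a 0 1 * b 1 0 = _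
    rw [hb', mul_zero, add_zero]
  map_zero' := rfl
  map_add' := by rintro ⟨a, _⟩ ⟨b, _⟩; rfl
  commutes' := by
    intro r
    show (algebraMap R (Matrix (Fin 2) (Fin 2) S)) r 0 0 = algebraMap R S r
    rw [Matrix.algebraMap_eq_diagonal]
    rw [Matrix.diagonal_apply_eq]
    rfl

/-- Projection onto the (1,1) entry, as an algebra hom on upper triangular matrices. -/
def utProj₁ : upperTri R S →ₐ[R] S where
  toFun M := M.val 1 1
  map_one' := rfl
  map_mul' := by
    rintro ⟨a, ha⟩ ⟨b, hb⟩
    show (a * b) 1 1 = a 1 1 * b 1 1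
    rw [Matrix.mul_apply, Fin.sum_univ_two]
    have ha' : a 1 0 = 0 := ha
    change a 1 0 * b 0 1 + a 1 1 * b 1 1 = _
    rw [ha', zero_mul, zero_add]
  map_zero' := rfl
  map_add' := by rintro ⟨a, _⟩ ⟨b, _⟩; rfl
  commutes' := by
    intro r
    show (algebraMap R (Matrix (Fin 2) (Fin 2) S)) r 1 1 = algebraMap R S r
    rw [Matrix.algebraMap_eq_diagonal]
    rw [Matrix.diagonal_apply_eq]
    rfl

/-- Projection onto the (0,1) entry, as a linear map on upper triangular matrices. -/
def utOff : upperTri R S →ₗ[R] S where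
  toFun M := M.val 0 1
  map_add' := by rintro ⟨a, _⟩ ⟨b, _⟩; rfl
  map_smul' := by rintro r ⟨a, _⟩; rfl

/-- Diagonal embedding with two algebra homs. -/
def utDiag {A : Type} [Ring A] [Algebra R A] (u v : A →ₐ[R] S) : A →ₐ[R] upperTri R S where
  toFun a := ⟨Matrix.diagonal ![u a, v a], by
    show Matrix.diagonal ![u a, v a] 1 0 = 0
    exact Matrix.diagonal_apply_ne _ (by decide)⟩
  map_one' := by
    ext i j
    fin_cases i <;> fin_cases j <;>
      simp [Matrix.diagonal, Matrix.one_apply]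
  map_mul' := by
    intro a b
    ext i j
    fin_cases i <;> fin_cases j <;>
      simp [Matrix.diagonal, Matrix.mul_apply, Fin.sum_univ_two]
  map_zero' := by
    ext i j
    fin_cases i <;> fin_cases j <;> simp [Matrix.diagonal]
  map_add' := by
    intro a b
    ext i j
    fin_cases i <;> fin_cases j <;> simp [Matrix.diagonal]
  commutes' := by
    intro r
    ext i j
    fin_cases i <;> fin_cases j <;>
      simp [Matrix.diagonal, Matrix.algebraMap_eq_diagonal]

end Derivation

theorem homology_stabilization
    (R : Type) [CommRing R]
    -- the DGA `(A, dA)`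
    (A : Type) [Ring A] [Algebra R A]
    (𝒜 : ℤ → Submodule R A) [GradedAlgebra 𝒜]
    (dA : A →ₗ[R] A)
    (hdA2 : ∀ x, dA (dA x) = 0)
    (hdAdeg : ∀ (i : ℤ) (x : A), x ∈ 𝒜 i → dA x ∈ 𝒜 (i - 1))
    (hdAleib : ∀ (i : ℤ) (x y : A), x ∈ 𝒜 i →
      dA (x * y) = dA x * y + ((Int.negOnePow i : ℤˣ) : ℤ) • (x * dA y))
    -- the DGA `(S, dS)`
    (S : Type) [Ring S] [Algebra R S]
    (𝒮 : ℤ → Submodule R S) [GradedAlgebra 𝒮]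
    (dS : S →ₗ[R] S)
    (hdS2 : ∀ x, dS (dS x) = 0)
    (hdSdeg : ∀ (i : ℤ) (x : S), x ∈ 𝒮 i → dS x ∈ 𝒮 (i - 1))
    (hdSleib : ∀ (i : ℤ) (x y : S), x ∈ 𝒮 i →
      dS (x * y) = dS x * y + ((Int.negOnePow i : ℤˣ) : ℤ) • (x * dS y))
    -- `S` is the stabilization of `A`:
    (ι : A →ₐ[R] S)
    (hιd : ∀ x, dS (ι x) = ι (dA x))
    (hιdeg : ∀ (i : ℤ) (x : A), x ∈ 𝒜 i → ι x ∈ 𝒮 i)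
    (e₁ e₂ : S) (k : ℤ) (he₁ : e₁ ∈ 𝒮 (k + 1)) (he₂ : e₂ ∈ 𝒮 k)
    (hde₁ : dS e₁ = e₂) (hde₂ : dS e₂ = 0)
    (hfree : ∀ (B : Type) [Ring B] [Algebra R B], ∀ (f : A →ₐ[R] B) (b₁ b₂ : B),
      ∃! g : S →ₐ[R] B, g.comp ι = f ∧ g e₁ = b₁ ∧ g e₂ = b₂) :
    -- conclusion: `H(S, dS) ≅ H(A, dA)`
    Nonempty
      ((LinearMap.ker dS ⧸
          (LinearMap.range dS).comap (LinearMap.ker dS).subtype) ≃ₗ[R]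
        (LinearMap.ker dA ⧸
          (LinearMap.range dA).comap (LinearMap.ker dA).subtype)) := by
  classical
  -- sign facts
  have hε_succ : ∀ i : ℤ, ((Int.negOnePow (i + 1) : ℤˣ) : ℤ) = -((Int.negOnePow i : ℤˣ) : ℤ) := by
    intro i; rw [Int.negOnePow_succ]; rfl
  have hε_pred : ∀ i : ℤ, ((Int.negOnePow (i - 1) : ℤˣ) : ℤ) = -((Int.negOnePow i : ℤˣ) : ℤ) := by
    intro i
    have h := hε_succ (i - 1)
    rw [sub_add_cancel] at h
    linarith
  have hε_sq : ∀ i : ℤ, ((Int.negOnePow i : ℤˣ) : ℤ) * ((Int.negOnePow i : ℤˣ) : ℤ) = 1 := by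
    intro i; rw [← Units.val_mul, Int.units_mul_self]; rfl
  -- the retraction π
  obtain ⟨π, ⟨hπι, hπe₁, hπe₂⟩, -⟩ := hfree A (AlgHom.id R A) 0 0
  have hπι' : ∀ a, π (ι a) = a := fun a => DFunLike.congr_fun hπι a
  -- the sign automorphism α
  obtain ⟨α, hα⟩ := exists_signAlgHom R S 𝒮
  -- the twisted derivation h, via upper triangular matrices
  obtain ⟨g, ⟨hgι, hge₁, hge₂⟩, -⟩ := hfree ↥(upperTri R S) (utDiag R S (α.comp ι) ι)
    ⟨!![α e₁, 0; 0, 0], by show !![α e₁, 0; 0, 0] 1 0 = 0; simp⟩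
    ⟨!![α e₂, e₁; 0, 0], by show !![α e₂, e₁; 0, 0] 1 0 = 0; simp⟩
  have hdiag0 : ∀ (u v : A →ₐ[R] S) (a : A), (utProj₀ R S) (utDiag R S u v a) = u a := by
    intro u v a
    show (Matrix.diagonal ![u a, v a]) 0 0 = u a
    rw [Matrix.diagonal_apply_eq]
    rfl
  have hdiag1 : ∀ (u v : A →ₐ[R] S) (a : A), (utProj₁ R S) (utDiag R S u v a) = v a := by
    intro u v a
    show (Matrix.diagonal ![u a, v a]) 1 1 = v a
    rw [Matrix.diagonal_apply_eq]
    rfl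
  -- identify the diagonal components of g
  have hp₀ : (utProj₀ R S).comp g = α := by
    obtain ⟨w, hw, hu⟩ := hfree S (α.comp ι) (α e₁) (α e₂)
    have s1 : ((utProj₀ R S).comp g).comp ι = α.comp ι := by
      rw [AlgHom.comp_assoc, hgι]
      refine AlgHom.ext fun a => ?_
      show (utProj₀ R S) (utDiag R S (α.comp ι) ι a) = α (ι a)
      exact hdiag0 _ _ a
    have s2 : ((utProj₀ R S).comp g) e₁ = α e₁ := by
      show (utProj₀ R S) (g e₁) = α e₁
      rw [hge₁]; rfl
    have s3 : ((utProj₀ R S).comp g) e₂ = α e₂ := by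
      show (utProj₀ R S) (g e₂) = α e₂
      rw [hge₂]; rfl
    rw [hu _ ⟨s1, s2, s3⟩, hu α ⟨rfl, rfl, rfl⟩]
  have hp₁ : (utProj₁ R S).comp g = ι.comp π := by
    obtain ⟨w, hw, hu⟩ := hfree S ι 0 0
    have s1 : ((utProj₁ R S).comp g).comp ι = ι := by
      rw [AlgHom.comp_assoc, hgι]
      refine AlgHom.ext fun a => ?_
      show (utProj₁ R S) (utDiag R S (α.comp ι) ι a) = ι a
      exact hdiag1 _ _ a
    have s2 : ((utProj₁ R S).comp g) e₁ = 0 := by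
      show (utProj₁ R S) (g e₁) = 0
      rw [hge₁]; rfl
    have s3 : ((utProj₁ R S).comp g) e₂ = 0 := by
      show (utProj₁ R S) (g e₂) = 0
      rw [hge₂]; rfl
    have t1 : (ι.comp π).comp ι = ι := by
      rw [AlgHom.comp_assoc, hπι, AlgHom.comp_id]
    have t2 : (ι.comp π) e₁ = 0 := by
      show ι (π e₁) = 0
      rw [hπe₁, map_zero]
    have t3 : (ι.comp π) e₂ = 0 := by
      show ι (π e₂) = 0
      rw [hπe₂, map_zero]
    rw [hu _ ⟨s1, s2, s3⟩, hu _ ⟨t1, t2, t3⟩]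
  have hg00 : ∀ x, (g x).val 0 0 = α x := fun x => DFunLike.congr_fun hp₀ x
  have hg11 : ∀ x, (g x).val 1 1 = ι (π x) := fun x => DFunLike.congr_fun hp₁ x
  set h : S →ₗ[R] S := (utOff R S) ∘ₗ g.toLinearMap with hh
  have h_apply : ∀ x, h x = (g x).val 0 1 := fun x => rfl
  have h_ι : ∀ a, h (ι a) = 0 := by
    intro a
    rw [h_apply]
    have : g (ι a) = utDiag R S (α.comp ι) ι a := DFunLike.congr_fun hgι a
    rw [this]
    show (Matrix.diagonal ![α (ι a), ι a]) 0 1 = 0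
    exact Matrix.diagonal_apply_ne _ (by decide)
  have h_e₁ : h e₁ = 0 := by rw [h_apply, hge₁]; simp
  have h_e₂ : h e₂ = e₁ := by rw [h_apply, hge₂]; simp
  have h_mul : ∀ x y, h (x * y) = h x * ι (π y) + α x * h y := by
    intro x y
    have hm : (g (x * y)).val = (g x).val * (g y).val := by
      rw [map_mul]; rfl
    have := congrFun (congrFun hm 0) 1
    rw [Matrix.mul_apply, Fin.sum_univ_two] at this
    rw [h_apply, h_apply, h_apply, this, hg00, hg11]
    exact add_comm _ _
  -- the set of "good" elements
  set Good : Set S := {x | ∃ i : ℤ, x ∈ 𝒮 i ∧ π x ∈ 𝒜 i ∧ h x ∈ 𝒮 (i + 1) ∧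
      dS (ι (π x)) = ι (π (dS x)) ∧ dS (h x) + h (dS x) = x - ι (π x)} with hGood
  have good_ι : ∀ (i : ℤ) (a : A), a ∈ 𝒜 i → ι a ∈ Good := by
    intro i a ha
    refine ⟨i, hιdeg i a ha, ?_, ?_, ?_, ?_⟩
    · rw [hπι']; exact ha
    · rw [h_ι]; exact zero_mem _
    · rw [hπι', hιd, hπι']
    · simp only [h_ι, hιd, h_ι, map_zero, zero_add, add_zero, hπι', sub_self]
  have good_e₁ : e₁ ∈ Good := by
    refine ⟨k + 1, he₁, ?_, ?_, ?_, ?_⟩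
    · rw [hπe₁]; exact zero_mem _
    · rw [h_e₁]; exact zero_mem _
    · simp only [hπe₁, hde₁, hπe₂, map_zero]
    · simp only [h_e₁, hde₁, h_e₂, map_zero, zero_add, hπe₁, sub_zero]
  have good_e₂ : e₂ ∈ Good := by
    refine ⟨k, he₂, ?_, ?_, ?_, ?_⟩
    · rw [hπe₂]; exact zero_mem _
    · rw [h_e₂]; exact he₁
    · simp only [hπe₂, hde₂, map_zero]
    · simp only [h_e₂, hde₂, hde₁, map_zero, add_zero, hπe₂, sub_zero]
  -- multiplicative closure of Good
  have good_mul : ∀ x y : S, x ∈ Good → y ∈ Good → x * y ∈ Good := by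
    rintro x y ⟨i, hxS, hxA, hxh, hxC, hxK⟩ ⟨j, hyS, hyA, hyh, hyC, hyK⟩
    have hρy : ι (π y) ∈ 𝒮 j := hιdeg j _ hyA
    refine ⟨i + j, SetLike.mul_mem_graded hxS hyS, ?_, ?_, ?_, ?_⟩
    · rw [map_mul]
      exact SetLike.mul_mem_graded hxA hyA
    · rw [h_mul]
      have t1 : h x * ι (π y) ∈ 𝒮 (i + 1 + j) := SetLike.mul_mem_graded hxh hρy
      rw [show i + 1 + j = i + j + 1 by ring] at t1
      have t2 : α x * h y ∈ 𝒮 (i + (j + 1)) := by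
        rw [hα i x hxS, smul_mul_assoc]
        exact zsmul_mem (SetLike.mul_mem_graded hxS hyh) _
      rw [show i + (j + 1) = i + j + 1 by ring] at t2
      exact add_mem t1 t2
    · -- chain condition for the product
      rw [map_mul π, map_mul ι, hdSleib i _ _ (hιdeg i _ hxA), hxC, hyC]
      rw [hdSleib i x y hxS, map_add, map_add, map_mul, map_mul, map_zsmul, map_zsmul,
        map_mul, map_mul]
    · -- homotopy identity for the product
      have u1 : dS (h x * ι (π y)) =
          dS (h x) * ι (π y) + (-((Int.negOnePow i : ℤˣ) : ℤ)) • (h x * ι (π (dS y))) := by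
        rw [hdSleib (i + 1) _ _ hxh, hyC, hε_succ]
      have u2 : dS (α x * h y) =
          ((Int.negOnePow i : ℤˣ) : ℤ) • (dS x * h y) + x * dS (h y) := by
        rw [hα i x hxS, smul_mul_assoc, map_zsmul, hdSleib i x (h y) hxS,
          smul_add, smul_smul, hε_sq, one_smul]
      have v1 : h (dS x * y) =
          h (dS x) * ι (π y) + (-((Int.negOnePow i : ℤˣ) : ℤ)) • (dS x * h y) := by
        rw [h_mul, hα (i - 1) _ (hdSdeg i x hxS), hε_pred, smul_mul_assoc]
      have v2 : h (x * dS y) =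
          h x * ι (π (dS y)) + ((Int.negOnePow i : ℤˣ) : ℤ) • (x * h (dS y)) := by
        rw [h_mul, hα i x hxS, smul_mul_assoc]
      have E1 : dS (h (x * y)) =
          (dS (h x) * ι (π y) + x * dS (h y)) +
          ((-((Int.negOnePow i : ℤˣ) : ℤ)) • (h x * ι (π (dS y))) +
            ((Int.negOnePow i : ℤˣ) : ℤ) • (dS x * h y)) := by
        rw [h_mul, map_add, u1, u2]
        module
      have E2 : h (dS (x * y)) =
          (h (dS x) * ι (π y) + x * h (dS y)) +
          (((Int.negOnePow i : ℤˣ) : ℤ) • (h x * ι (π (dS y))) +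
            (-((Int.negOnePow i : ℤˣ) : ℤ)) • (dS x * h y)) := by
        rw [hdSleib i x y hxS, map_add, map_zsmul, v1, v2, smul_add, smul_smul, hε_sq,
          one_smul]
        module
      have c1 : dS (h x) * ι (π y) + h (dS x) * ι (π y)
          = x * ι (π y) - ι (π x) * ι (π y) := by
        rw [← add_mul, hxK, sub_mul]
      have c2 : x * dS (h y) + x * h (dS y) = x * y - x * ι (π y) := by
        rw [← mul_add, hyK, mul_sub]
      calc dS (h (x * y)) + h (dS (x * y))
          = (dS (h x) * ι (π y) + h (dS x) * ι (π y)) +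
            (x * dS (h y) + x * h (dS y)) := by rw [E1, E2]; module
        _ = (x * ι (π y) - ι (π x) * ι (π y)) + (x * y - x * ι (π y)) := by rw [c1, c2]
        _ = x * y - ι (π (x * y)) := by rw [map_mul π, map_mul ι]; abel
  -- the span of Good is a subalgebra containing the generators, hence everything
  have good_one : (1 : S) ∈ Good := by
    have := good_ι 0 1 (SetLike.one_mem_graded 𝒜)
    rwa [map_one] at this
  have span_mul : ∀ x ∈ Submodule.span R Good, ∀ y ∈ Submodule.span R Good,
      x * y ∈ Submodule.span R Good := by
    intro x hx
    refine Submodule.span_induction (p := fun x _ => ∀ y ∈ Submodule.span R Good,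
      x * y ∈ Submodule.span R Good) ?_ ?_ ?_ ?_ hx
    · intro z hz y hy
      refine Submodule.span_induction (p := fun y _ => z * y ∈ Submodule.span R Good)
        ?_ ?_ ?_ ?_ hy
      · intro w hw
        exact Submodule.subset_span (good_mul z w hz hw)
      · show z * 0 ∈ Submodule.span R Good
        rw [mul_zero]; exact zero_mem _
      · intro a b _ _ ha hb
        show z * (a + b) ∈ Submodule.span R Good
        rw [mul_add]; exact add_mem ha hb
      · intro r a _ ha
        show z * (r • a) ∈ Submodule.span R Good
        rw [mul_smul_comm]; exact Submodule.smul_mem _ r ha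
    · intro y hy
      show (0 : S) * y ∈ Submodule.span R Good
      rw [zero_mul]; exact zero_mem _
    · intro a b _ _ ha hb y hy
      show (a + b) * y ∈ Submodule.span R Good
      rw [add_mul]; exact add_mem (ha y hy) (hb y hy)
    · intro r a _ ha y hy
      show (r • a) * y ∈ Submodule.span R Good
      rw [smul_mul_assoc]; exact Submodule.smul_mem _ r (ha y hy)
  have hPι : ∀ a : A, ι a ∈ Submodule.span R Good := by
    intro a
    have hrep := DirectSum.sum_support_decompose 𝒜 a
    rw [← hrep, map_sum]
    refine sum_mem ?_
    intro i _
    exact Submodule.subset_span (good_ι i _ (DirectSum.decompose 𝒜 a i).2)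
  have hPtop : ∀ x : S, x ∈ Submodule.span R Good := by
    set P : Subalgebra R S := (Submodule.span R Good).toSubalgebra
      (Submodule.subset_span good_one) (fun x y hx hy => span_mul x hx y hy) with hP
    have hmem : ∀ x : S, (x ∈ P) = (x ∈ Submodule.span R Good) := fun _ => rfl
    obtain ⟨q, ⟨hqι, hqe₁, hqe₂⟩, -⟩ := hfree ↥P (ι.codRestrict P (fun a => hPι a))
      ⟨e₁, Submodule.subset_span good_e₁⟩ ⟨e₂, Submodule.subset_span good_e₂⟩
    obtain ⟨w, hw, hu⟩ := hfree S ι e₁ e₂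
    have s1 : (P.val.comp q).comp ι = ι := by
      rw [AlgHom.comp_assoc, hqι]
      exact AlgHom.ext fun a => rfl
    have s2 : (P.val.comp q) e₁ = e₁ := by
      show (q e₁ : S) = e₁
      rw [hqe₁]
    have s3 : (P.val.comp q) e₂ = e₂ := by
      show (q e₂ : S) = e₂
      rw [hqe₂]
    have hid : P.val.comp q = AlgHom.id R S := by
      rw [hu _ ⟨s1, s2, s3⟩, hu (AlgHom.id R S) ⟨AlgHom.id_comp ι, rfl, rfl⟩]
    intro x
    have hx : (q x : S) = x := DFunLike.congr_fun hid x
    rw [← hx]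
    exact (q x).2
  -- extract the chain-map and homotopy identities for all elements
  have key : ∀ x : S, dS (ι (π x)) = ι (π (dS x)) ∧ dS (h x) + h (dS x) = x - ι (π x) := by
    intro x
    refine Submodule.span_induction (p := fun x _ =>
      dS (ι (π x)) = ι (π (dS x)) ∧ dS (h x) + h (dS x) = x - ι (π x)) ?_ ?_ ?_ ?_ (hPtop x)
    · rintro z ⟨i, -, -, -, hC, hK⟩
      exact ⟨hC, hK⟩
    · simp
    · rintro a b _ _ ⟨hC1, hK1⟩ ⟨hC2, hK2⟩
      constructor
      · simp only [map_add]
        rw [hC1, hC2]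
      · simp only [map_add]
        rw [add_add_add_comm, hK1, hK2]
        abel
    · rintro r a _ ⟨hC1, hK1⟩
      constructor
      · simp only [map_smul]
        rw [hC1]
      · simp only [map_smul]
        rw [← smul_add, hK1, smul_sub]
  have hπd : ∀ x : S, π (dS x) = dA (π x) := by
    intro x
    have h1 := (key x).1
    rw [hιd] at h1
    have h2 := congrArg π h1
    rw [hπι', hπι'] at h2
    exact h2.symm
  -- construct the homology isomorphism
  set ZS : Submodule R S := LinearMap.ker dS with hZS
  set BS : Submodule R ZS := (LinearMap.range dS).comap ZS.subtype with hBS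
  set ZA : Submodule R A := LinearMap.ker dA with hZA
  set BA : Submodule R ZA := (LinearMap.range dA).comap ZA.subtype with hBA
  have hπZ : ∀ z : ZS, π z.val ∈ ZA := by
    intro z
    have hz : dS z.val = 0 := z.2
    show dA (π z.val) = 0
    rw [← hπd, hz, map_zero]
  have hιZ : ∀ z : ZA, ι z.val ∈ ZS := by
    intro z
    have hz : dA z.val = 0 := z.2
    show dS (ι z.val) = 0
    rw [hιd, hz, map_zero]
  set F1 : ZS →ₗ[R] ZA := LinearMap.codRestrict ZA (π.toLinearMap ∘ₗ ZS.subtype) hπZ with hF1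
  set G1 : ZA →ₗ[R] ZS := LinearMap.codRestrict ZS (ι.toLinearMap ∘ₗ ZA.subtype) hιZ with hG1
  have hF1app : ∀ z : ZS, (F1 z).val = π z.val := fun _ => rfl
  have hG1app : ∀ z : ZA, (G1 z).val = ι z.val := fun _ => rfl
  set F2 : ZS →ₗ[R] (ZA ⧸ BA) := BA.mkQ ∘ₗ F1 with hF2
  set G2 : ZA →ₗ[R] (ZS ⧸ BS) := BS.mkQ ∘ₗ G1 with hG2
  have hFker : BS ≤ LinearMap.ker F2 := by
    rintro z hz
    obtain ⟨w, hw⟩ := hz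
    show BA.mkQ (F1 z) = 0
    rw [Submodule.mkQ_apply, Submodule.Quotient.mk_eq_zero]
    show π z.val ∈ LinearMap.range dA
    refine ⟨π w, ?_⟩
    rw [← hπd, hw]
    rfl
  have hGker : BA ≤ LinearMap.ker G2 := by
    rintro z hz
    obtain ⟨w, hw⟩ := hz
    show BS.mkQ (G1 z) = 0
    rw [Submodule.mkQ_apply, Submodule.Quotient.mk_eq_zero]
    show ι z.val ∈ LinearMap.range dS
    refine ⟨ι w, ?_⟩
    rw [hιd, hw]
    rfl
  set Φ : (ZS ⧸ BS) →ₗ[R] (ZA ⧸ BA) := BS.liftQ F2 hFker with hΦ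
  set Ψ : (ZA ⧸ BA) →ₗ[R] (ZS ⧸ BS) := BA.liftQ G2 hGker with hΨ
  have hΦΨ : Φ.comp Ψ = LinearMap.id := by
    apply Submodule.linearMap_qext
    refine LinearMap.ext fun z => ?_
    show Φ (Ψ (Submodule.Quotient.mk z)) = Submodule.Quotient.mk z
    rw [hΨ, Submodule.liftQ_apply]
    show Φ (Submodule.Quotient.mk (G1 z)) = Submodule.Quotient.mk z
    rw [hΦ, Submodule.liftQ_apply]
    show Submodule.Quotient.mk (F1 (G1 z)) = Submodule.Quotient.mk z
    congr 1
    apply Subtype.ext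
    rw [hF1app, hG1app, hπι']
  have hΨΦ : Ψ.comp Φ = LinearMap.id := by
    apply Submodule.linearMap_qext
    refine LinearMap.ext fun z => ?_
    show Ψ (Φ (Submodule.Quotient.mk z)) = Submodule.Quotient.mk z
    rw [hΦ, Submodule.liftQ_apply]
    show Ψ (Submodule.Quotient.mk (F1 z)) = Submodule.Quotient.mk z
    rw [hΨ, Submodule.liftQ_apply]
    show Submodule.Quotient.mk (G1 (F1 z)) = Submodule.Quotient.mk z
    rw [Submodule.Quotient.eq]
    show (G1 (F1 z)).val - z.val ∈ LinearMap.range dS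
    rw [hG1app, hF1app]
    have hz : dS z.val = 0 := z.2
    have hK := (key z.val).2
    rw [hz, map_zero, add_zero] at hK
    refine ⟨-(h z.val), ?_⟩
    rw [map_neg, hK]
    abel
  exact ⟨LinearEquiv.ofLinear Φ Ψ hΦΨ hΨΦ⟩
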